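/- Let N ≥ 1 and, for θ = (θ_1, …, θ_N) ∈ [0,1)^N, define f₁(ξ,θ) = Σ_{j=1}^N sin(2jξ/N + 2πθ_j) and M₁(θ) = sup_{ξ ≥ 0} |f₁(ξ,θ)|. Then for every λ > 0, the Lebesgue measure of the set { θ ∈ [0,1)^N : M₁(θ) ≤ Nλ/2 + (2/λ) ln(8N(N+1)) + (2/λ) ln(2π) } is at least 3/4. -/

import Mathlib

open Set MeasureTheory
open scoped Real

section Aux

lemma oneDim (b c : ℝ) :
    ∫ t in Set.Ico (0:ℝ) 1, Real.exp (b * Real.sin (c + 2*π*t)) ≤ Real.exp (b^2/2) := by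
  have hcont : Continuous fun t : ℝ => Real.exp (b * Real.sin (c + 2*π*t)) := by continuity
  have hcont2 : Continuous fun t : ℝ => Real.exp (-(b * Real.sin (c + 2*π*t))) := by continuity
  rw [setIntegral_congr_set Ico_ae_eq_Ioc,
    ← intervalIntegral.integral_of_le zero_le_one]
  have hper : Function.Periodic (fun t : ℝ => Real.exp (b * Real.sin (c + 2*π*t))) 1 := by
    intro t
    have h : c + 2*π*(t+1) = (c + 2*π*t) + 2*π := by ring
    simp only [h, Real.sin_add_two_pi]
  have h2 : (∫ t in (0:ℝ)..1, Real.exp (b * Real.sin (c + 2*π*t)))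
      = ∫ t in (0:ℝ)..1, Real.exp (-(b * Real.sin (c + 2*π*t))) := by
    have e1 : (∫ t in (0:ℝ)..1, Real.exp (b * Real.sin (c + 2*π*t)))
        = ∫ t in (1/2:ℝ)..(3/2:ℝ), Real.exp (b * Real.sin (c + 2*π*t)) := by
      have := hper.intervalIntegral_add_eq (0:ℝ) (1/2:ℝ)
      norm_num at this
      convert this using 2 <;> norm_num
    rw [e1]
    have e2 := intervalIntegral.integral_comp_add_right
      (a := (0:ℝ)) (b := (1:ℝ)) (fun t => Real.exp (b * Real.sin (c + 2*π*t))) (1/2)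
    norm_num only at e2
    rw [← e2]
    apply intervalIntegral.integral_congr
    intro t _
    have h : c + 2*π*(t+1/2) = (c + 2*π*t) + π := by ring
    simp only [h, Real.sin_add_pi, mul_neg, neg_mul]
  have key : (∫ t in (0:ℝ)..1, Real.exp (b * Real.sin (c + 2*π*t)))
      = ∫ t in (0:ℝ)..1, Real.cosh (b * Real.sin (c + 2*π*t)) := by
    have hi1 : IntervalIntegrable (fun t => Real.exp (b * Real.sin (c + 2*π*t))) volume 0 1 :=
      hcont.intervalIntegrable _ _
    have hi2 : IntervalIntegrable (fun t => Real.exp (-(b * Real.sin (c + 2*π*t)))) volume 0 1 :=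
      hcont2.intervalIntegrable _ _
    have : (∫ t in (0:ℝ)..1, Real.exp (b * Real.sin (c + 2*π*t)))
        = ((∫ t in (0:ℝ)..1, Real.exp (b * Real.sin (c + 2*π*t)))
          + (∫ t in (0:ℝ)..1, Real.exp (-(b * Real.sin (c + 2*π*t))))) / 2 := by
      rw [← h2]; ring
    rw [this, ← intervalIntegral.integral_add hi1 hi2, ← intervalIntegral.integral_div]
    apply intervalIntegral.integral_congr
    intro t _
    simp only [Real.cosh_eq]
  rw [key]
  have : (Real.exp (b^2/2)) = ∫ _t in (0:ℝ)..1, Real.exp (b^2/2) := by simp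
  rw [this]
  apply intervalIntegral.integral_mono_on zero_le_one
    ((by continuity : Continuous fun t : ℝ => Real.cosh (b * Real.sin (c + 2*π*t))).intervalIntegrable _ _)
    (intervalIntegrable_const)
  intro t _
  calc Real.cosh (b * Real.sin (c + 2*π*t)) ≤ Real.exp ((b * Real.sin (c + 2*π*t))^2/2) :=
        Real.cosh_le_exp_half_sq _
    _ ≤ Real.exp (b^2/2) := by
        apply Real.exp_le_exp.2
        have : (b * Real.sin (c + 2*π*t))^2 = b^2 * (Real.sin (c + 2*π*t))^2 := by ring
        rw [this]
        nlinarith [Real.sin_sq_le_one (c + 2*π*t), sq_nonneg b]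

lemma cube_vol (N : ℕ) :
    volume (Set.pi (univ : Set (Fin N)) (fun _ => Ico (0:ℝ) 1)) = 1 := by
  rw [volume_pi_pi]
  simp

lemma tailBound (N : ℕ) (b a : ℝ) (c : Fin N → ℝ) :
    volume {θ : Fin N → ℝ | (∀ j, θ j ∈ Ico (0:ℝ) 1)
        ∧ a ≤ b * ∑ j, Real.sin (c j + 2*π*θ j)}
      ≤ ENNReal.ofReal (Real.exp ((N:ℝ) * b^2/2 - a)) := by
  set h : (Fin N → ℝ) → ℝ := fun θ => b * ∑ j, Real.sin (c j + 2*π*θ j) with hh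
  set C := Set.pi (univ : Set (Fin N)) (fun _ => Ico (0:ℝ) 1) with hC
  have hCmeas : MeasurableSet C := MeasurableSet.univ_pi (fun _ => measurableSet_Ico)
  have hcont : Continuous h := by
    apply Continuous.mul continuous_const
    apply continuous_finset_sum
    intro j _
    exact Real.continuous_sin.comp (continuous_const.add ((continuous_const.mul (continuous_apply j))))
  have hEmeas : MeasurableSet {θ : Fin N → ℝ | a ≤ h θ} :=
    measurableSet_le measurable_const hcont.measurable
  have hset : {θ : Fin N → ℝ | (∀ j, θ j ∈ Ico (0:ℝ) 1)
      ∧ a ≤ b * ∑ j, Real.sin (c j + 2*π*θ j)} = {θ | a ≤ h θ} ∩ C := by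
    ext θ
    simp only [Set.mem_setOf_eq, Set.mem_inter_iff, hC, Set.mem_pi, Set.mem_univ,
      forall_true_left, hh]
    tauto
  set μ := volume.restrict C with hμ
  have hfin : IsFiniteMeasure μ := by
    constructor
    rw [hμ, Measure.restrict_apply_univ, cube_vol]
    exact ENNReal.one_lt_top
  -- the integral bound
  have hbound : ∀ θ, h θ ≤ |b| * N := by
    intro θ
    calc h θ ≤ |h θ| := le_abs_self _
      _ = |b| * |∑ j, Real.sin (c j + 2*π*θ j)| := abs_mul _ _
      _ ≤ |b| * N := by
        apply mul_le_mul_of_nonneg_left _ (abs_nonneg b)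
        calc |∑ j, Real.sin (c j + 2*π*θ j)| ≤ ∑ j : Fin N, |Real.sin (c j + 2*π*θ j)| :=
            Finset.abs_sum_le_sum_abs _ _
          _ ≤ ∑ _j : Fin N, 1 := Finset.sum_le_sum (fun j _ => Real.abs_sin_le_one _)
          _ = N := by simp
  have hint : Integrable (fun θ => Real.exp (h θ)) μ := by
    apply Integrable.mono' (integrable_const (Real.exp (|b| * N)))
      (hcont.rexp.aestronglyMeasurable)
    filter_upwards with θ
    rw [Real.norm_eq_abs, abs_of_nonneg (Real.exp_nonneg _)]
    exact Real.exp_le_exp.2 (hbound θ)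
  have hintegral : (∫ θ, Real.exp (h θ) ∂μ) ≤ Real.exp ((N:ℝ) * b^2/2) := by
    have e1 : (∫ θ, Real.exp (h θ) ∂μ) = ∫ θ, C.indicator (fun θ => Real.exp (h θ)) θ := by
      rw [hμ, integral_indicator hCmeas]
    have e2 : ∀ θ : Fin N → ℝ, C.indicator (fun θ => Real.exp (h θ)) θ
        = ∏ j, (Ico (0:ℝ) 1).indicator (fun t => Real.exp (b * Real.sin (c j + 2*π*t))) (θ j) := by
      intro θ
      by_cases hθ : θ ∈ C
      · rw [Set.indicator_of_mem hθ]
        have hmem : ∀ j, θ j ∈ Ico (0:ℝ) 1 := by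
          intro j
          exact hθ j (Set.mem_univ j)
        rw [hh]
        simp only [Set.indicator_of_mem (hmem _)]
        rw [Finset.mul_sum, Real.exp_sum]
      · rw [Set.indicator_of_notMem hθ]
        rw [hC, Set.mem_pi] at hθ
        push_neg at hθ
        obtain ⟨j, _, hj⟩ := hθ
        rw [eq_comm]
        apply Finset.prod_eq_zero (Finset.mem_univ j)
        rw [Set.indicator_of_notMem hj]
    calc (∫ θ, Real.exp (h θ) ∂μ)
        = ∫ θ : Fin N → ℝ, ∏ j, (Ico (0:ℝ) 1).indicator
            (fun t => Real.exp (b * Real.sin (c j + 2*π*t))) (θ j) := by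
          rw [e1]; exact integral_congr_ae (Filter.Eventually.of_forall e2)
      _ = ∏ j : Fin N, ∫ t : ℝ, (Ico (0:ℝ) 1).indicator
            (fun t => Real.exp (b * Real.sin (c j + 2*π*t))) t :=
          MeasureTheory.integral_fintype_prod_eq_prod (ι := Fin N)
            (fun j => (Ico (0:ℝ) 1).indicator (fun t => Real.exp (b * Real.sin (c j + 2*π*t))))
      _ ≤ ∏ _j : Fin N, Real.exp (b^2/2) := by
          apply Finset.prod_le_prod
          · intro j _
            rw [integral_indicator measurableSet_Ico]
            apply integral_nonneg
            intro t
            exact (Real.exp_nonneg _)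
          · intro j _
            rw [integral_indicator measurableSet_Ico]
            exact oneDim b (c j)
      _ = Real.exp ((N:ℝ) * b^2/2) := by
          rw [Finset.prod_const, Finset.card_univ, Fintype.card_fin, ← Real.exp_nat_mul]
          ring_nf
  -- Markov
  have hmarkov := mul_meas_ge_le_integral_of_nonneg
    (f := fun θ => Real.exp (h θ)) (μ := μ)
    (Filter.Eventually.of_forall (fun θ => Real.exp_nonneg _)) hint (Real.exp a)
  have hsetE : {x : Fin N → ℝ | Real.exp a ≤ Real.exp (h x)} = {θ | a ≤ h θ} := by
    ext θ; simp [Real.exp_le_exp]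
  rw [hsetE] at hmarkov
  have hμE : μ {θ | a ≤ h θ} ≠ ⊤ := by
    apply ne_of_lt
    apply lt_of_le_of_lt (measure_mono (Set.subset_univ _))
    rw [hμ, Measure.restrict_apply_univ, cube_vol]
    exact ENNReal.one_lt_top
  have htoReal : (μ {θ | a ≤ h θ}).toReal ≤ Real.exp ((N:ℝ) * b^2/2 - a) := by
    have hexpa : (0:ℝ) < Real.exp a := Real.exp_pos a
    rw [Real.exp_sub]
    rw [← le_div_iff₀' hexpa] at hmarkov
    calc (μ {θ | a ≤ h θ}).toReal ≤ (∫ θ, Real.exp (h θ) ∂μ) / Real.exp a := hmarkov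
      _ ≤ Real.exp ((N:ℝ) * b^2/2) / Real.exp a := by
          gcongr
  rw [hset, ← Measure.restrict_apply hEmeas, ← hμ]
  calc μ {θ | a ≤ h θ} = ENNReal.ofReal ((μ {θ | a ≤ h θ}).toReal) := by
        rw [ENNReal.ofReal_toReal hμE]
    _ ≤ ENNReal.ofReal (Real.exp ((N:ℝ) * b^2/2 - a)) := ENNReal.ofReal_le_ofReal htoReal

lemma lipbound (N : ℕ) (hN : 1 ≤ N) (θ : Fin N → ℝ) (x y : ℝ) :
    |(∑ j : Fin N, Real.sin (2 * ((j : ℕ) + 1 : ℝ) * x / N + 2 * π * θ j))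
      - ∑ j : Fin N, Real.sin (2 * ((j : ℕ) + 1 : ℝ) * y / N + 2 * π * θ j)|
      ≤ 2 * N * |x - y| := by
  rw [← Finset.sum_sub_distrib]
  calc |∑ j : Fin N, (Real.sin (2 * ((j : ℕ) + 1 : ℝ) * x / N + 2 * π * θ j)
        - Real.sin (2 * ((j : ℕ) + 1 : ℝ) * y / N + 2 * π * θ j))|
      ≤ ∑ j : Fin N, |Real.sin (2 * ((j : ℕ) + 1 : ℝ) * x / N + 2 * π * θ j)
        - Real.sin (2 * ((j : ℕ) + 1 : ℝ) * y / N + 2 * π * θ j)| :=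
      Finset.abs_sum_le_sum_abs _ _
    _ ≤ ∑ _j : Fin N, 2 * |x - y| := by
      apply Finset.sum_le_sum
      intro j _
      have hL : ∀ A B : ℝ, |Real.sin A - Real.sin B| ≤ 1 * |A - B| := by
        intro A B
        rw [Real.sin_sub_sin, one_mul]
        calc |2 * Real.sin ((A - B)/2) * Real.cos ((A + B)/2)|
            = 2 * |Real.sin ((A - B)/2)| * |Real.cos ((A + B)/2)| := by
              rw [abs_mul, abs_mul]; norm_num
          _ ≤ 2 * |(A - B)/2| * 1 := by
              apply mul_le_mul (by
                have := Real.abs_sin_le_abs (x := (A - B)/2)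
                nlinarith [abs_nonneg ((A-B)/2)]) (Real.abs_cos_le_one _) (abs_nonneg _) (by positivity)
          _ = |A - B| := by rw [abs_div]; simp [abs_of_nonneg]; ring
      have hL := hL (2 * ((j : ℕ) + 1 : ℝ) * x / N + 2 * π * θ j)
        (2 * ((j : ℕ) + 1 : ℝ) * y / N + 2 * π * θ j)
      have hNpos : (0:ℝ) < N := by positivity
      have harg : (2 * ((j : ℕ) + 1 : ℝ) * x / N + 2 * π * θ j)
          - (2 * ((j : ℕ) + 1 : ℝ) * y / N + 2 * π * θ j)
          = (2 * ((j : ℕ) + 1 : ℝ) / N) * (x - y) := by field_simp; ring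
      have hj : ((j : ℕ) + 1 : ℝ) ≤ N := by
        have := j.2
        exact_mod_cast Nat.succ_le_of_lt this
      have hc : 2 * ((j : ℕ) + 1 : ℝ) / N ≤ 2 := by
        rw [div_le_iff₀ hNpos]
        nlinarith
      calc |Real.sin _ - Real.sin _| ≤ _ := hL
        _ = |(2 * ((j : ℕ) + 1 : ℝ) / N) * (x - y)| := by rw [one_mul, harg]
        _ = (2 * ((j : ℕ) + 1 : ℝ) / N) * |x - y| := by
            rw [abs_mul, abs_of_nonneg (by positivity : (0:ℝ) ≤ 2 * ((j : ℕ) + 1 : ℝ) / N)]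
        _ ≤ 2 * |x - y| := by
            apply mul_le_mul_of_nonneg_right hc (abs_nonneg _)
    _ = 2 * N * |x - y| := by
      rw [Finset.sum_const, Finset.card_univ, Fintype.card_fin]
      push_cast; ring

lemma periodicf (N : ℕ) (hN : 1 ≤ N) (θ : Fin N → ℝ) :
    Function.Periodic
      (fun ξ => ∑ j : Fin N, Real.sin (2 * ((j : ℕ) + 1 : ℝ) * ξ / N + 2 * π * θ j))
      (π * N) := by
  intro ξ
  apply Finset.sum_congr rfl
  intro j _
  have hNpos : (0:ℝ) < N := by positivity
  have h : 2 * ((j : ℕ) + 1 : ℝ) * (ξ + π * N) / N + 2 * π * θ j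
      = (2 * ((j : ℕ) + 1 : ℝ) * ξ / N + 2 * π * θ j) + ((j:ℕ)+1 : ℕ) * (2 * π) := by
    push_cast
    field_simp
    ring
  rw [h, Real.sin_add_nat_mul_two_pi]

lemma supred (N : ℕ) (hN : 1 ≤ N) (θ : Fin N → ℝ) (δ : ℝ) (hδ : 0 < δ) (m : ℕ)
    (hm : π * N ≤ m * δ) (a : ℝ)
    (h : ∀ i : ℕ, i < m →
      |∑ j : Fin N, Real.sin (2 * ((j : ℕ) + 1 : ℝ) * (i * δ) / N + 2 * π * θ j)| ≤ a)
    (ξ : ℝ) (hξ : 0 ≤ ξ) :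
    |∑ j : Fin N, Real.sin (2 * ((j : ℕ) + 1 : ℝ) * ξ / N + 2 * π * θ j)| ≤ a + 2 * N * δ := by
  set g := fun ξ => ∑ j : Fin N, Real.sin (2 * ((j : ℕ) + 1 : ℝ) * ξ / N + 2 * π * θ j) with hg
  have hper := periodicf N hN θ
  have hNpos : (0:ℝ) < N := by positivity
  have hP : (0:ℝ) < π * N := by positivity
  set k := ⌊ξ / (π * N)⌋ with hk
  set ξ' := ξ - k * (π * N) with hξ'
  have hk0 : 0 ≤ k := Int.floor_nonneg.2 (by positivity)
  have h1 : (k : ℝ) ≤ ξ / (π * N) := Int.floor_le _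
  have h2 : ξ / (π * N) < k + 1 := Int.lt_floor_add_one _
  have hξ'0 : 0 ≤ ξ' := by
    rw [hξ', sub_nonneg]
    calc (k:ℝ) * (π * N) ≤ (ξ / (π * N)) * (π * N) := by
          apply mul_le_mul_of_nonneg_right h1 hP.le
      _ = ξ := by field_simp
  have hξ'lt : ξ' < π * N := by
    rw [hξ', sub_lt_iff_lt_add]
    calc ξ = (ξ / (π * N)) * (π * N) := by field_simp
      _ < (k + 1) * (π * N) := by apply mul_lt_mul_of_pos_right h2 hP
      _ = π * N + k * (π * N) := by ring
  have hgper : g ξ = g ξ' := (hper.sub_int_mul_eq k).symm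
  set i := ⌊ξ' / δ⌋₊ with hi
  have hi1 : (i : ℝ) * δ ≤ ξ' := by
    calc (i:ℝ) * δ ≤ (ξ' / δ) * δ := by
          apply mul_le_mul_of_nonneg_right (Nat.floor_le (by positivity)) hδ.le
      _ = ξ' := by field_simp
  have hi2 : ξ' < (i + 1) * δ := by
    calc ξ' = (ξ' / δ) * δ := by field_simp
      _ < (i + 1) * δ := by
        apply mul_lt_mul_of_pos_right (Nat.lt_floor_add_one _) hδ
  have him : i < m := by
    by_contra hc
    push_neg at hc
    have : (m:ℝ) * δ ≤ (i:ℝ) * δ := by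
      apply mul_le_mul_of_nonneg_right _ hδ.le
      exact_mod_cast hc
    linarith
  have hclose : |ξ' - i * δ| ≤ δ := by
    rw [abs_of_nonneg (by linarith)]
    nlinarith
  calc |g ξ| = |g ξ'| := by rw [hgper]
    _ ≤ |g (i * δ)| + |g ξ' - g (i * δ)| := by
        have := abs_add_le (g (i * δ)) (g ξ' - g (i * δ))
        simp only [add_sub_cancel] at this
        linarith
    _ ≤ a + 2 * N * |ξ' - i * δ| := by
        have hb := lipbound N hN θ ξ' (i * δ)
        have ha := h i him
        exact add_le_add ha hb
    _ ≤ a + 2 * N * δ := by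
        have : 2 * (N:ℝ) * |ξ' - i * δ| ≤ 2 * N * δ :=
          mul_le_mul_of_nonneg_left hclose (by positivity)
        linarith

lemma absf_le (N : ℕ) (θ : Fin N → ℝ) (ξ : ℝ) :
    |∑ j : Fin N, Real.sin (2 * ((j : ℕ) + 1 : ℝ) * ξ / N + 2 * π * θ j)| ≤ N := by
  calc |∑ j : Fin N, Real.sin (2 * ((j : ℕ) + 1 : ℝ) * ξ / N + 2 * π * θ j)|
      ≤ ∑ j : Fin N, |Real.sin (2 * ((j : ℕ) + 1 : ℝ) * ξ / N + 2 * π * θ j)| :=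
        Finset.abs_sum_le_sum_abs _ _
    _ ≤ ∑ _j : Fin N, 1 := Finset.sum_le_sum (fun j _ => Real.abs_sin_le_one _)
    _ = N := by simp

lemma ennreal_34_le_one : (3/4 : ENNReal) ≤ 1 := by
  calc (3/4 : ENNReal) ≤ 4/4 := ENNReal.div_le_div_right (by norm_num) 4
    _ = 1 := ENNReal.div_self (by norm_num) (by norm_num)

lemma ennreal34 (x : ENNReal) (h : 1 ≤ x + 1/4) : (3/4 : ENNReal) ≤ x := by
  rcases le_or_gt (3/4 : ENNReal) x with h34 | h34
  · exact h34
  · exfalso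
    have h1 : x + 1/4 < 3/4 + 1/4 :=
      ENNReal.add_lt_add_right (by norm_num) h34
    have h2 : (3/4 : ENNReal) + 1/4 = 1 := by
      rw [ENNReal.div_add_div_same]
      norm_num
      exact ENNReal.div_self (by norm_num) (by norm_num)
    rw [h2] at h1
    exact absurd h (not_le.2 h1)

end Aux

set_option maxHeartbeats 1000000 in
theorem stmt11 (N : ℕ) (hN : 1 ≤ N) (lam : ℝ) (hlam : 0 < lam) :
    (3 / 4 : ENNReal) ≤ volume {θ : Fin N → ℝ |
      (∀ j, θ j ∈ Ico (0 : ℝ) 1) ∧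
      sSup ((fun ξ : ℝ =>
          |∑ j : Fin N, Real.sin (2 * ((j : ℕ) + 1 : ℝ) * ξ / N + 2 * Real.pi * θ j)|) ''
        Ici 0)
        ≤ N * lam / 2 + (2 / lam) * Real.log (8 * N * (N + 1))
            + (2 / lam) * Real.log (2 * Real.pi)} := by
  have hNpos : (0:ℝ) < N := by positivity
  have hN1 : (1:ℝ) ≤ N := by exact_mod_cast hN
  set T : ℝ := N * lam / 2 + (2 / lam) * Real.log (8 * N * (N + 1))
      + (2 / lam) * Real.log (2 * Real.pi) with hT
  have hlog1 : 0 ≤ Real.log (8 * (N:ℝ) * (N + 1)) := by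
    apply Real.log_nonneg
    nlinarith
  have hlog2 : 0 ≤ Real.log (2 * Real.pi) := by
    apply Real.log_nonneg
    nlinarith [Real.pi_gt_three]
  have hT0 : 0 ≤ T := by
    rw [hT]
    have : 0 ≤ (2/lam) * Real.log (8 * (N:ℝ) * (N + 1)) := by positivity
    have : 0 ≤ (2/lam) * Real.log (2 * Real.pi) := by positivity
    positivity
  set target := {θ : Fin N → ℝ |
      (∀ j, θ j ∈ Ico (0 : ℝ) 1) ∧
      sSup ((fun ξ : ℝ =>
          |∑ j : Fin N, Real.sin (2 * ((j : ℕ) + 1 : ℝ) * ξ / N + 2 * Real.pi * θ j)|) ''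
        Ici 0) ≤ T} with htarget
  set C := {θ : Fin N → ℝ | ∀ j, θ j ∈ Ico (0:ℝ) 1} with hCdef
  have hCvol : volume C = 1 := by
    have : C = Set.pi (univ : Set (Fin N)) (fun _ => Ico (0:ℝ) 1) := by
      ext θ; simp [hCdef, Set.mem_pi]
    rw [this, cube_vol]
  by_cases hlam2 : 2 ≤ lam
  · -- trivial case: T ≥ N
    have hsub : C ⊆ target := by
      intro θ hθ
      refine ⟨hθ, ?_⟩
      have hsup : sSup ((fun ξ : ℝ =>
          |∑ j : Fin N, Real.sin (2 * ((j : ℕ) + 1 : ℝ) * ξ / N + 2 * Real.pi * θ j)|) ''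
          Ici 0) ≤ N := by
        apply Real.sSup_le
        · rintro x ⟨ξ, _, rfl⟩
          exact absf_le N θ ξ
        · positivity
      have hNT : (N:ℝ) ≤ T := by
        have h1 : (N:ℝ) ≤ N * lam / 2 := by nlinarith
        have h2 : 0 ≤ (2/lam) * Real.log (8 * (N:ℝ) * (N + 1)) := by positivity
        have h3 : 0 ≤ (2/lam) * Real.log (2 * Real.pi) := by positivity
        rw [hT]; linarith
      exact le_trans hsup hNT
    calc (3/4 : ENNReal) ≤ 1 := ennreal_34_le_one
      _ = volume C := hCvol.symm
      _ ≤ volume target := measure_mono hsub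
  · push_neg at hlam2
    set δ : ℝ := 1 / (2 * N * lam) with hδdef
    have hδ : 0 < δ := by positivity
    set m : ℕ := ⌈2 * π * N^2 * lam⌉₊ with hm
    have hmδ : π * N ≤ m * δ := by
      have h1 : 2 * π * N^2 * lam ≤ m := Nat.le_ceil _
      have h2 : (2 * π * N^2 * lam) * δ = π * N := by
        rw [hδdef]; field_simp
      calc π * N = (2 * π * N^2 * lam) * δ := h2.symm
        _ ≤ m * δ := mul_le_mul_of_nonneg_right h1 hδ.le
    set a : ℝ := T - 1/lam with ha
    set Bad : ℕ → ℝ → Set (Fin N → ℝ) := fun i ε =>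
      {θ : Fin N → ℝ | (∀ j, θ j ∈ Ico (0:ℝ) 1)
        ∧ lam * a ≤ (ε * lam) * ∑ j : Fin N, Real.sin
            (2 * ((j : ℕ) + 1 : ℝ) * ((i:ℝ) * δ) / N + 2*π*θ j)} with hBad
    set U := ⋃ i ∈ Finset.range m, (Bad i 1 ∪ Bad i (-1)) with hU
    -- inclusion
    have hsub : C ⊆ target ∪ U := by
      intro θ hθC
      by_cases hθU : θ ∈ U
      · exact Or.inr hθU
      · left
        refine ⟨hθC, ?_⟩
        have hgrid : ∀ i : ℕ, i < m →
            |∑ j : Fin N, Real.sin (2 * ((j : ℕ) + 1 : ℝ) * ((i:ℝ) * δ) / N + 2 * π * θ j)|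
              ≤ a := by
          intro i him
          have h1 : θ ∉ Bad i 1 := by
            intro hmem
            exact hθU (Set.mem_biUnion (Finset.mem_range.2 him) (Or.inl hmem))
          have h2 : θ ∉ Bad i (-1) := by
            intro hmem
            exact hθU (Set.mem_biUnion (Finset.mem_range.2 him) (Or.inr hmem))
          rw [hBad] at h1 h2
          simp only [Set.mem_setOf_eq, not_and, not_le] at h1 h2
          have h1' := h1 hθC
          have h2' := h2 hθC
          rw [one_mul] at h1'
          rw [neg_mul, neg_mul] at h2'
          set S := ∑ j : Fin N, Real.sin (2 * ((j : ℕ) + 1 : ℝ) * ((i:ℝ) * δ) / N + 2 * π * θ j)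
          have hA : S < a := lt_of_mul_lt_mul_left (by linarith) hlam.le
          have hB : -S < a := lt_of_mul_lt_mul_left (by linarith) hlam.le
          rw [abs_le]
          constructor <;> linarith
        have hred := supred N hN θ δ hδ m hmδ a hgrid
        apply Real.sSup_le
        · rintro x ⟨ξ, hξ, rfl⟩
          have := hred ξ hξ
          have h2Nδ : 2 * (N:ℝ) * δ = 1/lam := by
            rw [hδdef]; field_simp
          calc |∑ j : Fin N, Real.sin (2 * ((j : ℕ) + 1 : ℝ) * ξ / N + 2 * Real.pi * θ j)|
              ≤ a + 2 * N * δ := this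
            _ = T := by rw [h2Nδ, ha]; ring
        · exact hT0
    -- measure of U
    have hBadVol : ∀ i : ℕ, ∀ ε : ℝ, ε^2 = 1 →
        volume (Bad i ε) ≤ ENNReal.ofReal (Real.exp ((N:ℝ) * lam^2/2 - lam * a)) := by
      intro i ε hε
      have := tailBound N (ε * lam) (lam * a)
        (fun j => 2 * ((j : ℕ) + 1 : ℝ) * ((i:ℝ) * δ) / N)
      rw [hBad]
      have heq : ((N:ℝ) * (ε * lam)^2/2 - lam * a) = ((N:ℝ) * lam^2/2 - lam * a) := by
        have : (ε * lam)^2 = lam^2 := by rw [mul_pow, hε, one_mul]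
        rw [this]
      rw [heq] at this
      exact this
    have hEval : Real.exp ((N:ℝ) * lam^2/2 - lam * a)
        = Real.exp 1 / ((8 * (N:ℝ) * (N+1))^2 * (2*π)^2) := by
      have h8 : (0:ℝ) < 8 * (N:ℝ) * (N+1) := by positivity
      have h2π : (0:ℝ) < 2 * π := by positivity
      have hlamne : lam ≠ 0 := ne_of_gt hlam
      have harg : (N:ℝ) * lam^2/2 - lam * a
          = 1 - ((Real.log (8*(N:ℝ)*(N+1)) + Real.log (8*(N:ℝ)*(N+1)))
            + (Real.log (2*π) + Real.log (2*π))) := by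
        rw [ha, hT]
        field_simp
        ring
      rw [harg, Real.exp_sub, Real.exp_add, Real.exp_add, Real.exp_add,
        Real.exp_log h8, Real.exp_log h2π]
      ring
    have hUvol : volume U ≤ (1/4 : ENNReal) := by
      have hstep : volume U ≤ (m : ENNReal) * (2 * ENNReal.ofReal
          (Real.exp ((N:ℝ) * lam^2/2 - lam * a))) := by
        rw [hU]
        calc volume (⋃ i ∈ Finset.range m, (Bad i 1 ∪ Bad i (-1)))
            ≤ ∑ i ∈ Finset.range m, volume (Bad i 1 ∪ Bad i (-1)) :=
              measure_biUnion_finset_le _ _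
          _ ≤ ∑ _i ∈ Finset.range m, 2 * ENNReal.ofReal
              (Real.exp ((N:ℝ) * lam^2/2 - lam * a)) := by
              apply Finset.sum_le_sum
              intro i _
              calc volume (Bad i 1 ∪ Bad i (-1))
                  ≤ volume (Bad i 1) + volume (Bad i (-1)) := measure_union_le _ _
                _ ≤ ENNReal.ofReal (Real.exp ((N:ℝ) * lam^2/2 - lam * a))
                    + ENNReal.ofReal (Real.exp ((N:ℝ) * lam^2/2 - lam * a)) :=
                    add_le_add (hBadVol i 1 (by norm_num)) (hBadVol i (-1) (by norm_num))
                _ = 2 * ENNReal.ofReal (Real.exp ((N:ℝ) * lam^2/2 - lam * a)) := by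
                    rw [two_mul]
          _ = (m : ENNReal) * (2 * ENNReal.ofReal
              (Real.exp ((N:ℝ) * lam^2/2 - lam * a))) := by
              rw [Finset.sum_const, Finset.card_range, nsmul_eq_mul]
      have hreal : (m:ℝ) * (2 * (Real.exp 1 / ((8 * (N:ℝ) * (N+1))^2 * (2*π)^2))) ≤ 1/4 := by
        have hmle : (m:ℝ) ≤ 5 * π * N^2 := by
          have h1 : (m:ℝ) < 2 * π * N^2 * lam + 1 := by
            exact Nat.ceil_lt_add_one (by positivity : (0:ℝ) ≤ 2 * π * N^2 * lam)
          have hπ3 := Real.pi_gt_three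
          nlinarith
        have he : Real.exp 1 ≤ 2.72 := (Real.exp_one_lt_d9.trans (by norm_num)).le
        have hepos := Real.exp_pos 1
        have hπ3 := Real.pi_gt_three
        have hD : (0:ℝ) < (8 * (N:ℝ) * (N+1))^2 * (2*π)^2 := by positivity
        have heq : (m:ℝ) * (2 * (Real.exp 1 / ((8 * (N:ℝ) * (N+1))^2 * (2*π)^2)))
            = ((m:ℝ) * 2 * Real.exp 1) / ((8 * (N:ℝ) * (N+1))^2 * (2*π)^2) := by ring
        rw [heq, div_le_iff₀ hD]
        have h1 : (m:ℝ) * 2 * Real.exp 1 ≤ (5 * π * N^2) * 2 * 2.72 := by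
          have hm0 : (0:ℝ) ≤ (m:ℝ) := Nat.cast_nonneg m
          nlinarith
        have hN12 : (4:ℝ) ≤ ((N:ℝ)+1)^2 := by nlinarith
        have h2 : (5 * π * (N:ℝ)^2) * 2 * 2.72 ≤ 1/4 * ((8 * (N:ℝ) * (N+1))^2 * (2*π)^2) := by
          have hNN : (0:ℝ) < π * (N:ℝ)^2 := by positivity
          nlinarith [mul_le_mul_of_nonneg_left hN12 (mul_pos (mul_pos (by norm_num : (0:ℝ) < 64) (mul_pos Real.pi_pos Real.pi_pos)) (by positivity : (0:ℝ) < (N:ℝ)^2)).le]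
        linarith
      have hconv : (m : ENNReal) * (2 * ENNReal.ofReal
          (Real.exp ((N:ℝ) * lam^2/2 - lam * a)))
          = ENNReal.ofReal ((m:ℝ) * (2 * (Real.exp 1 / ((8 * (N:ℝ) * (N+1))^2 * (2*π)^2)))) := by
        rw [hEval] at *
        rw [ENNReal.ofReal_mul (Nat.cast_nonneg m), ENNReal.ofReal_mul (by norm_num : (0:ℝ) ≤ 2),
          ENNReal.ofReal_natCast, ENNReal.ofReal_ofNat]
      have h14 : ENNReal.ofReal ((1:ℝ)/4) = (1/4 : ENNReal) := by
        rw [ENNReal.ofReal_div_of_pos (by norm_num), ENNReal.ofReal_one, ENNReal.ofReal_ofNat]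
      calc volume U ≤ _ := hstep
        _ = ENNReal.ofReal ((m:ℝ) * (2 * (Real.exp 1 / ((8 * (N:ℝ) * (N+1))^2 * (2*π)^2)))) := hconv
        _ ≤ ENNReal.ofReal ((1:ℝ)/4) := ENNReal.ofReal_le_ofReal hreal
        _ = (1/4 : ENNReal) := h14
    -- conclude
    have h1 : (1 : ENNReal) ≤ volume target + volume U := by
      calc (1 : ENNReal) = volume C := hCvol.symm
        _ ≤ volume (target ∪ U) := measure_mono hsub
        _ ≤ volume target + volume U := measure_union_le _ _
    apply ennreal34
    calc (1:ENNReal) ≤ volume target + volume U := h1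
      _ ≤ volume target + 1/4 := add_le_add_right hUvol _
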